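/- Let P ⊆ ℝ × ℝ be x-monotone, i.e. the intersection of P with every vertical line {p | p.1 = d} is convex. Suppose P contains the horizontal segment from (x₀, c₁) to (x₁, c₁) and the horizontal segment from (x₀, c₂) to (x₁, c₂), where c₁ ≤ c₂ and x₀ ≤ p.1 ≤ x₁ for every p ∈ P. Then for every c with c₁ ≤ c ≤ c₂, the horizontal segment from (x₀, c) to (x₁, c) is also contained in P. -/

import Mathlib

/-- The align segment of a balanced polygon is not unique: any horizontal
segment at a height between two spanning heights is contained in `P`. -/
theorem corridor_horizontal_segments
    (P : Set (ℝ × ℝ))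
    (hV : ∀ d : ℝ, Convex ℝ {p ∈ P | p.1 = d})
    (x₀ x₁ c₁ c₂ : ℝ) (hc : c₁ ≤ c₂)
    (hσ₁ : segment ℝ ((x₀, c₁) : ℝ × ℝ) ((x₁, c₁) : ℝ × ℝ) ⊆ P)
    (hσ₂ : segment ℝ ((x₀, c₂) : ℝ × ℝ) ((x₁, c₂) : ℝ × ℝ) ⊆ P)
    (hspan : ∀ p ∈ P, x₀ ≤ p.1 ∧ p.1 ≤ x₁) :
    ∀ c : ℝ, c₁ ≤ c → c ≤ c₂ →
      segment ℝ ((x₀, c) : ℝ × ℝ) ((x₁, c) : ℝ × ℝ) ⊆ P := by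
  intro c hc1 hc2 p hp
  obtain ⟨a, b, ha, hb, hab, hpe⟩ := hp
  set x := a * x₀ + b * x₁ with hx
  have hpx : p = (x, c) := by
    rw [← hpe]
    refine Prod.ext rfl ?_
    show a * c + b * c = c
    linear_combination c * hab
  have h1 : ((x, c₁) : ℝ × ℝ) ∈ P := by
    refine hσ₁ ⟨a, b, ha, hb, hab, ?_⟩
    refine Prod.ext rfl ?_
    show a * c₁ + b * c₁ = c₁
    linear_combination c₁ * hab
  have h2 : ((x, c₂) : ℝ × ℝ) ∈ P := by
    refine hσ₂ ⟨a, b, ha, hb, hab, ?_⟩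
    refine Prod.ext rfl ?_
    show a * c₂ + b * c₂ = c₂
    linear_combination c₂ * hab
  rcases eq_or_lt_of_le hc with rfl | hlt
  · have hcc : c = c₁ := le_antisymm hc2 hc1
    rw [hpx, hcc]; exact h1
  · have hne : c₂ - c₁ > 0 := by linarith
    have hmem : ((x, c) : ℝ × ℝ) ∈ segment ℝ ((x, c₁) : ℝ × ℝ) ((x, c₂) : ℝ × ℝ) := by
      refine ⟨(c₂ - c) / (c₂ - c₁), (c - c₁) / (c₂ - c₁), div_nonneg (by linarith) hne.le, div_nonneg (by linarith) hne.le,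
        by field_simp; ring, ?_⟩
      refine Prod.ext ?_ ?_
      · show (c₂ - c) / (c₂ - c₁) * x + (c - c₁) / (c₂ - c₁) * x = x
        field_simp; ring
      · show (c₂ - c) / (c₂ - c₁) * c₁ + (c - c₁) / (c₂ - c₁) * c₂ = c
        field_simp; ring
    have := (hV x).segment_subset ⟨h1, rfl⟩ ⟨h2, rfl⟩ hmem
    rw [hpx]; exact this.1
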